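/- arXiv:1702.00627 — 2 statements merged into one kernel-verified Lean document; each statement's English description precedes it below -/
import Mathlib

section
/- Let γ ∈ [2π/3, π) and define η : [0, γ/3] → ℝ by η(α) = (sin(γ/3 − α))^{3/2}·(sin γ)^{−1/2} − sin(3α/2). Then η is strictly decreasing on [0, γ/3], η(0) > 0, and η(γ/3) < 0, so there is a unique α₀ ∈ (0, γ/3) with η(α₀) = 0; moreover α₀ < 2(π − γ)/3 if and only if γ < 5π/6. -/
open Real Set

noncomputable section

theorem eta_root_bound (γ : ℝ) (hγ : γ ∈ Set.Ico (2 * Real.pi / 3) Real.pi) :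
    let η : ℝ → ℝ := fun α =>
      Real.sin (γ / 3 - α) ^ ((3:ℝ)/2) * Real.sin γ ^ (-(1:ℝ)/2) - Real.sin (3 * α / 2)
    StrictAntiOn η (Set.Icc 0 (γ / 3)) ∧
    0 < η 0 ∧ η (γ / 3) < 0 ∧
    (∃! α₀ : ℝ, α₀ ∈ Set.Ioo 0 (γ / 3) ∧ η α₀ = 0) ∧
    (∀ α₀ ∈ Set.Ioo 0 (γ / 3), η α₀ = 0 →
      (α₀ < 2 * (Real.pi - γ) / 3 ↔ γ < 5 * Real.pi / 6)) := by
  obtain ⟨hγ1, hγ2⟩ := hγ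
  intro η
  have hπ := Real.pi_pos
  have hγpos : 0 < γ := by nlinarith
  have hsγ : 0 < Real.sin γ := Real.sin_pos_of_pos_of_lt_pi hγpos hγ2
  have hc : 0 < Real.sin γ ^ (-(1:ℝ)/2) := Real.rpow_pos_of_pos hsγ _
  have hγ3 : γ / 3 ≤ Real.pi / 3 := by linarith
  -- strict antitonicity
  have hanti : StrictAntiOn η (Set.Icc 0 (γ / 3)) := by
    intro a ha b hb hab
    have h1 : Real.sin (γ / 3 - b) ≤ Real.sin (γ / 3 - a) := by
      apply Real.strictMonoOn_sin.monotoneOn ⟨by linarith [hb.1, hb.2], by linarith [hb.1]⟩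
        ⟨by linarith [ha.1, ha.2], by linarith [ha.1]⟩ (by linarith)
    have h1' : Real.sin (γ / 3 - b) ^ ((3:ℝ)/2) ≤ Real.sin (γ / 3 - a) ^ ((3:ℝ)/2) :=
      Real.rpow_le_rpow (Real.sin_nonneg_of_nonneg_of_le_pi (by linarith [hb.2])
        (by linarith [hb.1])) h1 (by norm_num)
    have h2 : Real.sin (3 * a / 2) < Real.sin (3 * b / 2) := by
      apply Real.strictMonoOn_sin ⟨by linarith [ha.1], by linarith [ha.2]⟩
        ⟨by linarith [hb.1], by linarith [hb.2]⟩ (by linarith)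
    have := mul_le_mul_of_nonneg_right h1' hc.le
    simp only [η]
    linarith
  refine ⟨hanti, ?_, ?_, ?_, ?_⟩
  · -- η 0 > 0
    have hs3 : 0 < Real.sin (γ / 3) :=
      Real.sin_pos_of_pos_of_lt_pi (by linarith) (by linarith)
    have : 0 < Real.sin (γ / 3) ^ ((3:ℝ)/2) * Real.sin γ ^ (-(1:ℝ)/2) :=
      mul_pos (Real.rpow_pos_of_pos hs3 _) hc
    simpa [η] using this
  · -- η (γ/3) < 0
    have hs2 : 0 < Real.sin (γ / 2) :=
      Real.sin_pos_of_pos_of_lt_pi (by linarith) (by linarith)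
    have : η (γ / 3) = -Real.sin (γ / 2) := by
      simp only [η, sub_self, Real.sin_zero]
      rw [Real.zero_rpow (by norm_num)]
      ring_nf
    rw [this]; linarith
  · -- unique root
    have hcont : ContinuousOn η (Set.Icc 0 (γ / 3)) := by
      apply ContinuousOn.sub
      · exact (((Real.continuous_rpow_const (by norm_num)).comp
          ((Real.continuous_sin.comp (continuous_const.sub continuous_id)))).mul
          continuous_const).continuousOn
      · exact (Real.continuous_sin.comp (by continuity)).continuousOn
    have h0 : 0 < η 0 := by
      have hs3 : 0 < Real.sin (γ / 3) :=
        Real.sin_pos_of_pos_of_lt_pi (by linarith) (by linarith)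
      have : 0 < Real.sin (γ / 3) ^ ((3:ℝ)/2) * Real.sin γ ^ (-(1:ℝ)/2) :=
        mul_pos (Real.rpow_pos_of_pos hs3 _) hc
      simpa [η] using this
    have h1 : η (γ / 3) < 0 := by
      have hs2 : 0 < Real.sin (γ / 2) :=
        Real.sin_pos_of_pos_of_lt_pi (by linarith) (by linarith)
      have : η (γ / 3) = -Real.sin (γ / 2) := by
        simp only [η, sub_self, Real.sin_zero]
        rw [Real.zero_rpow (by norm_num)]
        ring_nf
      rw [this]; linarith
    have hsub := intermediate_value_Ioo' (by linarith : (0:ℝ) ≤ γ / 3) hcont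
    obtain ⟨α₀, hα₀, hroot⟩ := hsub ⟨h1, h0⟩
    refine ⟨α₀, ⟨hα₀, hroot⟩, ?_⟩
    rintro β ⟨hβ, hβ0⟩
    have hIoo : Set.Ioo (0:ℝ) (γ / 3) ⊆ Set.Icc 0 (γ / 3) := Set.Ioo_subset_Icc_self
    exact hanti.injOn (hIoo hβ) (hIoo hα₀) (by rw [hβ0, hroot])
  · -- the bound
    rintro α₀ ⟨hα₀1, hα₀2⟩ hroot
    set β := 2 * (Real.pi - γ) / 3 with hβdef
    have hβmem : β ∈ Set.Icc 0 (γ / 3) := ⟨by simp only [hβdef]; linarith, by simp only [hβdef]; linarith⟩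
    have hαmem : α₀ ∈ Set.Icc 0 (γ / 3) := ⟨hα₀1.le, hα₀2.le⟩
    -- compute η β
    have hs0 : 0 ≤ Real.sin (γ - 2 * Real.pi / 3) :=
      Real.sin_nonneg_of_nonneg_of_le_pi (by linarith) (by linarith)
    have hηβ : η β = Real.sin (γ - 2 * Real.pi / 3) ^ ((3:ℝ)/2) * Real.sin γ ^ (-(1:ℝ)/2)
        - Real.sin γ := by
      simp only [η, hβdef]
      have e1 : γ / 3 - 2 * (Real.pi - γ) / 3 = γ - 2 * Real.pi / 3 := by ring
      have e2 : 3 * (2 * (Real.pi - γ) / 3) / 2 = Real.pi - γ := by ring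
      rw [e1, e2, Real.sin_pi_sub]
    have hkey : η β < 0 ↔ γ < 5 * Real.pi / 6 := by
      rw [hηβ, sub_neg]
      have hrw : Real.sin γ = Real.sin γ ^ ((3:ℝ)/2) * Real.sin γ ^ (-(1:ℝ)/2) := by
        rw [← Real.rpow_add hsγ]
        norm_num
      nth_rewrite 2 [hrw]
      rw [mul_lt_mul_iff_of_pos_right hc,
        Real.rpow_lt_rpow_iff hs0 hsγ.le (by norm_num)]
      rw [show Real.sin γ = Real.sin (Real.pi - γ) by rw [Real.sin_pi_sub]]
      rw [Real.strictMonoOn_sin.lt_iff_lt ⟨by linarith, by linarith⟩ ⟨by linarith, by linarith⟩]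
      constructor <;> intro h <;> linarith
    rw [← hkey]
    constructor
    · intro h
      have := hanti hαmem hβmem h
      rw [hroot] at this
      exact this
    · intro h
      by_contra hle
      push_neg at hle
      rcases eq_or_lt_of_le hle with heq | hlt
      · rw [heq, hroot] at h; exact lt_irrefl 0 h
      · have := hanti hβmem hαmem hlt
        rw [hroot] at this
        linarith
end
end

section
/- Let p : ℝ → ℂ be locally integrable and even (p(−x) = p(x) for all x). Suppose that the set of Dirichlet eigenfunctions of −d²/dx² + p on the half-line — all nonzero y ∈ L²((0,∞),ℂ) with y, y' locally absolutely continuous on [0,∞), y(0) = 0, and −y'' + p·y = λ·y almost everywhere on (0,∞) for some λ ∈ ℂ — has dense linear span in L²((0,∞),ℂ), and that the set of Neumann eigenfunctions — defined in the same way but with the boundary condition y'(0) = 0 in place of y(0) = 0 — also has dense linear span in L²((0,∞),ℂ). Then the set of eigenfunctions of −d²/dx² + p on the whole line — all nonzero y ∈ L²(ℝ,ℂ) with y, y' locally absolutely continuous on ℝ and −y'' + p·y = λ·y almost everywhere on ℝ for some λ ∈ ℂ — has dense linear span in L²(ℝ,ℂ). -/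
open MeasureTheory Complex Set Filter
noncomputable section
abbrev muH : Measure ℝ := volume.restrict (Set.Ioi (0:ℝ))

/-- Eigenfunctions of `-d²/dx² + p` on the half line, as elements of `L²((0,∞),ℂ)`:
`y, y'` locally absolutely continuous on `[0,∞)`, `y ∈ L²`, `y` nonzero,
`-y'' + p·y = λ·y` a.e. on `(0,∞)`, and the boundary condition `bc y y'` holds. -/
def halfLineEigen (p : ℝ → ℂ) (bc : (ℝ → ℂ) → (ℝ → ℂ) → Prop) : Set (Lp ℂ 2 muH) :=
  { g | ∃ (y y' y'' : ℝ → ℂ) (lam : ℂ),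
      MemLp y 2 muH ∧
      LocallyIntegrableOn y' (Set.Ici 0) ∧
      (∀ x ∈ Set.Ici (0:ℝ), y x = y 0 + ∫ t in (0:ℝ)..x, y' t) ∧
      LocallyIntegrableOn y'' (Set.Ici 0) ∧
      (∀ x ∈ Set.Ici (0:ℝ), y' x = y' 0 + ∫ t in (0:ℝ)..x, y'' t) ∧
      bc y y' ∧
      ¬ (y =ᵐ[muH] (0 : ℝ → ℂ)) ∧
      (∀ᵐ x ∂muH, -y'' x + p x * y x = lam * y x) ∧
      (g : ℝ → ℂ) =ᵐ[muH] y }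

/-- Eigenfunctions of `-d²/dx² + p` on the whole line, as elements of `L²(ℝ,ℂ)`. -/
def wholeLineEigen (p : ℝ → ℂ) : Set (Lp ℂ 2 (volume : Measure ℝ)) :=
  { g | ∃ (y y' y'' : ℝ → ℂ) (lam : ℂ),
      MemLp y 2 (volume : Measure ℝ) ∧
      LocallyIntegrable y' ∧
      (∀ x : ℝ, y x = y 0 + ∫ t in (0:ℝ)..x, y' t) ∧
      LocallyIntegrable y'' ∧
      (∀ x : ℝ, y' x = y' 0 + ∫ t in (0:ℝ)..x, y'' t) ∧
      ¬ (y =ᵐ[(volume : Measure ℝ)] (0 : ℝ → ℂ)) ∧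
      (∀ᵐ x : ℝ ∂volume, -y'' x + p x * y x = lam * y x) ∧
      (g : ℝ → ℂ) =ᵐ[(volume : Measure ℝ)] y }


open scoped ENNReal

lemma map_abs_volume : Measure.map (fun x : ℝ => |x|) volume = (2 : ℝ≥0∞) • muH := by
  ext A hA
  rw [Measure.map_apply measurable_abs hA]
  have hpre : (fun x : ℝ => |x|) ⁻¹' A = (A ∩ Ici 0) ∪ (-(A ∩ Ioi 0)) := by
    ext x
    simp only [mem_preimage, Set.mem_union, Set.mem_inter_iff, Set.mem_Ici, Set.mem_Ioi,
      Set.mem_neg]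
    rcases le_or_gt 0 x with hx | hx
    · rw [_root_.abs_of_nonneg hx]
      constructor
      · intro h; exact Or.inl ⟨h, hx⟩
      · rintro (⟨h, _⟩ | ⟨_, h2⟩)
        · exact h
        · linarith
    · rw [_root_.abs_of_neg hx]
      constructor
      · intro h; exact Or.inr ⟨h, by linarith⟩
      · rintro (⟨_, h2⟩ | ⟨h, _⟩)
        · linarith
        · exact h
  rw [hpre]
  have hd : Disjoint (A ∩ Ici 0) (-(A ∩ Ioi 0)) := by
    refine Set.disjoint_left.2 ?_
    rintro x ⟨_, hx⟩ hx2
    rw [Set.mem_neg] at hx2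
    have h1 : (0:ℝ) < -x := hx2.2
    have h2 : (0:ℝ) ≤ x := hx
    linarith
  rw [measure_union hd ((hA.inter measurableSet_Ioi).neg)]
  have h1 : volume (A ∩ Ici 0) = volume (A ∩ Ioi 0) :=
    measure_congr (EventuallyEq.rfl.inter Ioi_ae_eq_Ici.symm)
  have h2 : volume (-(A ∩ Ioi 0)) = volume (A ∩ Ioi 0) := by
    have := (Measure.measurePreserving_neg (volume : Measure ℝ)).measure_preimage
      (s := A ∩ Ioi (0:ℝ)) (hA.inter measurableSet_Ioi).nullMeasurableSet
    rw [← this]; rfl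
  rw [h1, h2, Measure.smul_apply, Measure.restrict_apply hA, smul_eq_mul, two_mul]

lemma memLp_comp_abs {y : ℝ → ℂ} (hy : MemLp y 2 muH) :
    MemLp (fun x : ℝ => y |x|) 2 (volume : Measure ℝ) := by
  have h2 : MemLp y 2 ((2:ℝ≥0∞) • muH) := hy.smul_measure (by norm_num)
  rw [← map_abs_volume] at h2
  exact h2.comp_of_map measurable_abs.aemeasurable

lemma measurable_realSign : Measurable Real.sign := by
  have h : Real.sign = fun r : ℝ => if r < 0 then (-1:ℝ) else if 0 < r then 1 else 0 := by
    funext r; rfl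
  rw [h]
  exact Measurable.ite (measurableSet_lt measurable_id measurable_const) measurable_const
    (Measurable.ite (measurableSet_lt measurable_const measurable_id) measurable_const
      measurable_const)

lemma memLp_sign_smul_comp_abs {y : ℝ → ℂ} (hy : MemLp y 2 muH) :
    MemLp (fun x : ℝ => (Real.sign x : ℂ) * y |x|) 2 (volume : Measure ℝ) := by
  refine (memLp_comp_abs hy).of_le ?_ ?_
  · exact (Complex.measurable_ofReal.comp measurable_realSign).aestronglyMeasurable.mul
      (memLp_comp_abs hy).1
  · refine Eventually.of_forall fun x => ?_
    rw [norm_mul, Complex.norm_real]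
    rcases Real.sign_apply_eq x with h | h | h <;> rw [h] <;> simp

lemma locallyIntegrable_comp_abs {v : ℝ → ℂ} (hv : LocallyIntegrableOn v (Ici 0)) :
    LocallyIntegrable (fun x : ℝ => v |x|) volume := by
  rw [MeasureTheory.locallyIntegrable_iff]
  intro K hK
  obtain ⟨R, hR⟩ := hK.isBounded.subset_closedBall 0
  replace hR : K ⊆ Metric.closedBall 0 |R| :=
    hR.trans (Metric.closedBall_subset_closedBall (le_abs_self R))
  set S := |R| with hS
  have hS0 : 0 ≤ S := abs_nonneg R
  have hpos : IntegrableOn (fun x : ℝ => v |x|) (Icc 0 S) volume := by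
    have h1 : IntegrableOn v (Icc 0 S) volume :=
      hv.integrableOn_compact_subset (fun x hx => hx.1) isCompact_Icc
    refine h1.congr_fun ?_ measurableSet_Icc
    intro x hx
    simp [_root_.abs_of_nonneg hx.1]
  have hneg : IntegrableOn (fun x : ℝ => v |x|) (Icc (-S) 0) volume := by
    rw [← Measure.map_neg_eq_self (volume : Measure ℝ)]
    have m : MeasurableEmbedding fun x : ℝ => -x := (Homeomorph.neg ℝ).measurableEmbedding
    rw [m.integrableOn_map_iff]
    have hfun : ((fun x : ℝ => v |x|) ∘ fun x : ℝ => -x) = fun x : ℝ => v |x| := by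
      funext x; simp [Function.comp, abs_neg]
    have hset : (fun x : ℝ => -x) ⁻¹' Icc (-S) 0 = Icc 0 S := by
      ext x
      simp only [mem_preimage, mem_Icc]
      constructor <;> intro h <;> constructor <;> linarith [h.1, h.2]
    rw [hfun, hset]
    exact hpos
  refine ((hneg.union hpos).mono_set ?_)
  refine hR.trans ?_
  rw [Real.closedBall_eq_Icc, zero_sub, zero_add,
    ← Set.Icc_union_Icc_eq_Icc (neg_nonpos.2 hS0) hS0]

lemma locallyIntegrable_sign_smul_comp_abs {v : ℝ → ℂ} (hv : LocallyIntegrableOn v (Ici 0)) :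
    LocallyIntegrable (fun x : ℝ => (Real.sign x : ℂ) * v |x|) volume := by
  have h := locallyIntegrable_comp_abs hv
  rw [MeasureTheory.locallyIntegrable_iff] at h ⊢
  intro K hK
  refine Integrable.mono (h K hK) ?_ ?_
  · exact (Complex.measurable_ofReal.comp measurable_realSign).aestronglyMeasurable.mul
      (h K hK).aestronglyMeasurable
  · refine Eventually.of_forall fun x => ?_
    rw [norm_mul, Complex.norm_real]
    rcases Real.sign_apply_eq x with hs | hs | hs <;> rw [hs] <;> simp

lemma ae_ne_zero : ∀ᵐ x : ℝ ∂volume, x ≠ 0 := by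
  rw [ae_iff]
  have : {x : ℝ | ¬ x ≠ 0} = {0} := by ext x; simp
  rw [this]
  exact measure_singleton 0
lemma even_ext_mem (p : ℝ → ℂ) (heven : ∀ x : ℝ, p (-x) = p x)
    {y y' y'' : ℝ → ℂ} {lam : ℂ}
    (hy : MemLp y 2 muH) (hy'li : LocallyIntegrableOn y' (Ici 0))
    (hftc1 : ∀ x ∈ Ici (0:ℝ), y x = y 0 + ∫ t in (0:ℝ)..x, y' t)
    (hy''li : LocallyIntegrableOn y'' (Ici 0))
    (hftc2 : ∀ x ∈ Ici (0:ℝ), y' x = y' 0 + ∫ t in (0:ℝ)..x, y'' t)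
    (hbc : y' 0 = 0) (hnz : ¬ (y =ᵐ[muH] (0 : ℝ → ℂ)))
    (hode : ∀ᵐ x ∂muH, -y'' x + p x * y x = lam * y x) :
    (memLp_comp_abs hy).toLp (fun x : ℝ => y |x|) ∈ wholeLineEigen p := by
  refine ⟨fun x => y |x|, fun x => (Real.sign x : ℂ) * y' |x|, fun x => y'' |x|, lam,
    memLp_comp_abs hy, locallyIntegrable_sign_smul_comp_abs hy'li, ?_,
    locallyIntegrable_comp_abs hy''li, ?_, ?_, ?_, (memLp_comp_abs hy).coeFn_toLp⟩
  · -- FTC1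
    intro x
    dsimp only
    rw [abs_zero]
    rcases le_or_gt 0 x with hx | hx
    · rw [_root_.abs_of_nonneg hx]
      have hcong : (∫ t in (0:ℝ)..x, ((Real.sign t : ℂ) * y' |t|)) = ∫ t in (0:ℝ)..x, y' t := by
        refine intervalIntegral.integral_congr_ae (Eventually.of_forall fun t ht => ?_)
        rw [Set.uIoc_of_le hx] at ht
        rw [Real.sign_of_pos ht.1, _root_.abs_of_pos ht.1]
        simp
      rw [hcong]
      exact hftc1 x hx
    · rw [_root_.abs_of_neg hx]
      have hcong : (∫ t in (0:ℝ)..x, ((Real.sign t : ℂ) * y' |t|))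
          = ∫ t in (0:ℝ)..x, (-(y' (-t))) := by
        refine intervalIntegral.integral_congr fun t ht => ?_
        rw [Set.uIcc_of_ge hx.le] at ht
        rcases lt_or_eq_of_le ht.2 with h0 | h0
        · rw [Real.sign_of_neg h0, _root_.abs_of_neg h0]
          simp
        · rw [h0]
          simp [Real.sign_zero, hbc]
      rw [hcong, intervalIntegral.integral_neg, intervalIntegral.integral_comp_neg, neg_zero,
        intervalIntegral.integral_symm, neg_neg]
      exact hftc1 (-x) (by simp [mem_Ici]; linarith)
  · -- FTC2
    intro x
    dsimp only
    rw [abs_zero, Real.sign_zero, Complex.ofReal_zero, zero_mul, zero_add]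
    rcases le_or_gt 0 x with hx | hx
    · have hcong : (∫ t in (0:ℝ)..x, y'' |t|) = ∫ t in (0:ℝ)..x, y'' t := by
        refine intervalIntegral.integral_congr fun t ht => ?_
        rw [Set.uIcc_of_le hx] at ht
        simp [_root_.abs_of_nonneg ht.1]
      rw [_root_.abs_of_nonneg hx, hcong]
      have h2 := hftc2 x hx
      rw [hbc, zero_add] at h2
      rcases eq_or_lt_of_le hx with h0 | h0
      · rw [← h0]
        simp [Real.sign_zero, hbc]
      · rw [Real.sign_of_pos h0, Complex.ofReal_one, one_mul]
        exact h2
    · have hcong : (∫ t in (0:ℝ)..x, y'' |t|) = ∫ t in (0:ℝ)..x, y'' (-t) := by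
        refine intervalIntegral.integral_congr fun t ht => ?_
        rw [Set.uIcc_of_ge hx.le] at ht
        simp [_root_.abs_of_nonpos ht.2]
      rw [_root_.abs_of_neg hx, Real.sign_of_neg hx, hcong,
        intervalIntegral.integral_comp_neg, neg_zero, intervalIntegral.integral_symm]
      have h2 := hftc2 (-x) (by simp [mem_Ici]; linarith)
      rw [hbc, zero_add] at h2
      rw [← h2]
      push_cast
      ring
  · -- nonzero
    intro hYz
    apply hnz
    have h1 : (fun x : ℝ => y |x|) =ᵐ[muH] (0 : ℝ → ℂ) := ae_restrict_of_ae hYz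
    have h2 := ae_restrict_mem (μ := volume) (measurableSet_Ioi (a := (0:ℝ)))
    filter_upwards [h1, h2] with x hx1 hx2
    rw [← _root_.abs_of_pos (mem_Ioi.mp hx2)]
    exact hx1
  · -- ODE
    have h1 : ∀ᵐ x : ℝ ∂volume, x ∈ Ioi (0:ℝ) → -y'' x + p x * y x = lam * y x :=
      (ae_restrict_iff' measurableSet_Ioi).1 hode
    have h2 : ∀ᵐ x : ℝ ∂volume, -x ∈ Ioi (0:ℝ) → -y'' (-x) + p (-x) * y (-x) = lam * y (-x) :=
      (Measure.measurePreserving_neg (volume : Measure ℝ)).quasiMeasurePreserving.ae h1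
    filter_upwards [h1, h2, ae_ne_zero] with x hx1 hx2 hx3
    rcases hx3.lt_or_gt with hneg | hpos
    · have h := hx2 (by simpa using hneg)
      rw [heven x] at h
      rw [_root_.abs_of_neg hneg]
      exact h
    · rw [_root_.abs_of_pos hpos]
      exact hx1 hpos
lemma odd_ext_mem (p : ℝ → ℂ) (heven : ∀ x : ℝ, p (-x) = p x)
    {y y' y'' : ℝ → ℂ} {lam : ℂ}
    (hy : MemLp y 2 muH) (hy'li : LocallyIntegrableOn y' (Ici 0))
    (hftc1 : ∀ x ∈ Ici (0:ℝ), y x = y 0 + ∫ t in (0:ℝ)..x, y' t)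
    (hy''li : LocallyIntegrableOn y'' (Ici 0))
    (hftc2 : ∀ x ∈ Ici (0:ℝ), y' x = y' 0 + ∫ t in (0:ℝ)..x, y'' t)
    (hbc : y 0 = 0) (hnz : ¬ (y =ᵐ[muH] (0 : ℝ → ℂ)))
    (hode : ∀ᵐ x ∂muH, -y'' x + p x * y x = lam * y x) :
    (memLp_sign_smul_comp_abs hy).toLp (fun x : ℝ => (Real.sign x : ℂ) * y |x|)
      ∈ wholeLineEigen p := by
  refine ⟨fun x => (Real.sign x : ℂ) * y |x|, fun x => y' |x|,
    fun x => (Real.sign x : ℂ) * y'' |x|, lam,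
    memLp_sign_smul_comp_abs hy, locallyIntegrable_comp_abs hy'li, ?_,
    locallyIntegrable_sign_smul_comp_abs hy''li, ?_, ?_, ?_,
    (memLp_sign_smul_comp_abs hy).coeFn_toLp⟩
  · -- FTC1
    intro x
    dsimp only
    rw [abs_zero, Real.sign_zero, Complex.ofReal_zero, zero_mul, zero_add]
    rcases le_or_gt 0 x with hx | hx
    · have hcong : (∫ t in (0:ℝ)..x, y' |t|) = ∫ t in (0:ℝ)..x, y' t := by
        refine intervalIntegral.integral_congr fun t ht => ?_
        rw [Set.uIcc_of_le hx] at ht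
        simp [_root_.abs_of_nonneg ht.1]
      rw [_root_.abs_of_nonneg hx, hcong]
      have h1 := hftc1 x hx
      rw [hbc, zero_add] at h1
      rcases eq_or_lt_of_le hx with h0 | h0
      · rw [← h0]
        simp [Real.sign_zero, hbc]
      · rw [Real.sign_of_pos h0, Complex.ofReal_one, one_mul]
        exact h1
    · have hcong : (∫ t in (0:ℝ)..x, y' |t|) = ∫ t in (0:ℝ)..x, y' (-t) := by
        refine intervalIntegral.integral_congr fun t ht => ?_
        rw [Set.uIcc_of_ge hx.le] at ht
        simp [_root_.abs_of_nonpos ht.2]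
      rw [_root_.abs_of_neg hx, Real.sign_of_neg hx, hcong,
        intervalIntegral.integral_comp_neg, neg_zero, intervalIntegral.integral_symm]
      have h1 := hftc1 (-x) (by simp [mem_Ici]; linarith)
      rw [hbc, zero_add] at h1
      rw [← h1]
      push_cast
      ring
  · -- FTC2
    intro x
    dsimp only
    rw [abs_zero]
    rcases le_or_gt 0 x with hx | hx
    · rw [_root_.abs_of_nonneg hx]
      have hcong : (∫ t in (0:ℝ)..x, ((Real.sign t : ℂ) * y'' |t|)) = ∫ t in (0:ℝ)..x, y'' t := by
        refine intervalIntegral.integral_congr_ae (Eventually.of_forall fun t ht => ?_)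
        rw [Set.uIoc_of_le hx] at ht
        rw [Real.sign_of_pos ht.1, _root_.abs_of_pos ht.1]
        simp
      rw [hcong]
      exact hftc2 x hx
    · rw [_root_.abs_of_neg hx]
      have hcong : (∫ t in (0:ℝ)..x, ((Real.sign t : ℂ) * y'' |t|))
          = ∫ t in (0:ℝ)..x, (-(y'' (-t))) := by
        refine intervalIntegral.integral_congr_ae ?_
        filter_upwards [ae_ne_zero] with t ht hti
        rw [Set.uIoc_comm, Set.uIoc_of_le hx.le] at hti
        have htneg : t < 0 := lt_of_le_of_ne hti.2 ht
        rw [Real.sign_of_neg htneg, _root_.abs_of_neg htneg]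
        simp
      rw [hcong, intervalIntegral.integral_neg, intervalIntegral.integral_comp_neg, neg_zero,
        intervalIntegral.integral_symm, neg_neg]
      exact hftc2 (-x) (by simp [mem_Ici]; linarith)
  · -- nonzero
    intro hYz
    apply hnz
    have h1 : (fun x : ℝ => (Real.sign x : ℂ) * y |x|) =ᵐ[muH] (0 : ℝ → ℂ) :=
      ae_restrict_of_ae hYz
    have h2 := ae_restrict_mem (μ := volume) (measurableSet_Ioi (a := (0:ℝ)))
    filter_upwards [h1, h2] with x hx1 hx2
    have hx0 : 0 < x := mem_Ioi.mp hx2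
    rw [Real.sign_of_pos hx0, Complex.ofReal_one, one_mul, _root_.abs_of_pos hx0] at hx1
    exact hx1
  · -- ODE
    have h1 : ∀ᵐ x : ℝ ∂volume, x ∈ Ioi (0:ℝ) → -y'' x + p x * y x = lam * y x :=
      (ae_restrict_iff' measurableSet_Ioi).1 hode
    have h2 : ∀ᵐ x : ℝ ∂volume, -x ∈ Ioi (0:ℝ) → -y'' (-x) + p (-x) * y (-x) = lam * y (-x) :=
      (Measure.measurePreserving_neg (volume : Measure ℝ)).quasiMeasurePreserving.ae h1
    filter_upwards [h1, h2, ae_ne_zero] with x hx1 hx2 hx3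
    rcases hx3.lt_or_gt with hneg | hpos
    · have h := hx2 (by simpa using hneg)
      rw [heven x] at h
      rw [_root_.abs_of_neg hneg, Real.sign_of_neg hneg]
      push_cast
      linear_combination -h
    · rw [_root_.abs_of_pos hpos, Real.sign_of_pos hpos]
      have h := hx1 hpos
      push_cast
      linear_combination h
lemma dense_span_orth {E : Type*} [NormedAddCommGroup E] [InnerProductSpace ℂ E]
    {s : Set E} (hs : Dense (↑(Submodule.span ℂ s) : Set E)) {g : E}
    (h : ∀ u ∈ s, @inner ℂ _ _ u g = 0) : g = 0 := by
  have hs' : s ⊆ ((LinearMap.ker (innerSL ℂ g : E →ₗ[ℂ] ℂ) : Submodule ℂ E) : Set E) := by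
    intro u hu
    rw [SetLike.mem_coe, LinearMap.mem_ker, ContinuousLinearMap.coe_coe, innerSL_apply_apply, ← inner_conj_symm, h u hu, map_zero]
  have hle : (↑(Submodule.span ℂ s) : Set E) ⊆ ((LinearMap.ker (innerSL ℂ g : E →ₗ[ℂ] ℂ) : Submodule ℂ E) : Set E) :=
    Submodule.span_le.2 hs'
  have hclosed : IsClosed ((LinearMap.ker (innerSL ℂ g : E →ₗ[ℂ] ℂ) : Submodule ℂ E) : Set E) :=
    ContinuousLinearMap.isClosed_ker _
  have huniv : (Set.univ : Set E) ⊆ ((LinearMap.ker (innerSL ℂ g : E →ₗ[ℂ] ℂ) : Submodule ℂ E) : Set E) := by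
    rw [← hs.closure_eq]
    exact closure_minimal hle hclosed
  have hg : innerSL ℂ g g = 0 := huniv (Set.mem_univ g)
  rw [innerSL_apply_apply] at hg
  exact inner_self_eq_zero.mp hg

lemma inner_eq_integral {μ : Measure ℝ} (u v : Lp ℂ 2 μ) :
    @inner ℂ _ _ u v = ∫ x, (starRingEnd ℂ) ((u : ℝ → ℂ) x) * ((v : ℝ → ℂ) x) ∂μ := by
  rw [L2.inner_def]
  simp only [RCLike.inner_apply]
  exact integral_congr_ae (Eventually.of_forall fun x => mul_comm _ _)

lemma integrable_conj_mul {μ : Measure ℝ} {g h : ℝ → ℂ} (hg : MemLp g 2 μ) (hh : MemLp h 2 μ) :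
    Integrable (fun x => (starRingEnd ℂ) (g x) * h x) μ := by
  have h1 := L2.integrable_inner (𝕜 := ℂ) (hg.toLp g) (hh.toLp h)
  refine h1.congr ?_
  filter_upwards [hg.coeFn_toLp, hh.coeFn_toLp] with x h2 h3
  simp [RCLike.inner_apply, h2, h3]
  exact mul_comm _ _
lemma memLp_neg_comp (f : Lp ℂ 2 (volume : Measure ℝ)) :
    MemLp (fun x : ℝ => (f : ℝ → ℂ) (-x)) 2 (volume : Measure ℝ) :=
  (Lp.memLp f).comp_measurePreserving (Measure.measurePreserving_neg _)

lemma inner_even_ext {y : ℝ → ℂ} (hy : MemLp y 2 muH) (f : Lp ℂ 2 (volume : Measure ℝ)) :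
    @inner ℂ _ _ ((memLp_comp_abs hy).toLp (fun x : ℝ => y |x|)) f
      = ∫ x in Ioi (0:ℝ),
          (starRingEnd ℂ) (y x) * ((f : ℝ → ℂ) x + (f : ℝ → ℂ) (-x)) := by
  set F : ℝ → ℂ := (f : ℝ → ℂ) with hFdef
  set U := (memLp_comp_abs hy).toLp (fun x : ℝ => y |x|) with hUdef
  have hUc : (U : ℝ → ℂ) =ᵐ[volume] fun x => y |x| := (memLp_comp_abs hy).coeFn_toLp
  have hInt : Integrable (fun x : ℝ => (starRingEnd ℂ) (y |x|) * F x) volume := by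
    refine (L2.integrable_inner (𝕜 := ℂ) U f).congr ?_
    filter_upwards [hUc] with x hx
    simp [RCLike.inner_apply, hx]
    exact mul_comm _ _
  have step1 : @inner ℂ _ _ U f = ∫ x, (starRingEnd ℂ) (y |x|) * F x ∂volume := by
    rw [inner_eq_integral]
    refine integral_congr_ae ?_
    filter_upwards [hUc] with x hx
    rw [hx]
  have hsplit := intervalIntegral.integral_Iic_add_Ioi (b := (0:ℝ)) hInt.integrableOn hInt.integrableOn
  have hleft : (∫ x in Iic (0:ℝ), (starRingEnd ℂ) (y |x|) * F x)
      = ∫ x in Ioi (0:ℝ), (starRingEnd ℂ) (y x) * F (-x) := by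
    have e := integral_comp_neg_Iic (0:ℝ) (fun t : ℝ => (starRingEnd ℂ) (y |t|) * F (-t))
    simp only [abs_neg, neg_neg, neg_zero] at e
    rw [e]
    refine setIntegral_congr_fun measurableSet_Ioi fun x hx => ?_
    rw [_root_.abs_of_pos hx]
  have hright : (∫ x in Ioi (0:ℝ), (starRingEnd ℂ) (y |x|) * F x)
      = ∫ x in Ioi (0:ℝ), (starRingEnd ℂ) (y x) * F x := by
    refine setIntegral_congr_fun measurableSet_Ioi fun x hx => ?_
    rw [_root_.abs_of_pos hx]
  have hFm : MemLp F 2 muH := (Lp.memLp f).restrict _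
  have hFnm : MemLp (fun x : ℝ => F (-x)) 2 muH := (memLp_neg_comp f).restrict _
  have hI1 : Integrable (fun x : ℝ => (starRingEnd ℂ) (y x) * F x) muH :=
    integrable_conj_mul hy hFm
  have hI2 : Integrable (fun x : ℝ => (starRingEnd ℂ) (y x) * F (-x)) muH :=
    integrable_conj_mul hy hFnm
  have hadd : (∫ x in Ioi (0:ℝ), (starRingEnd ℂ) (y x) * F (-x))
        + ∫ x in Ioi (0:ℝ), (starRingEnd ℂ) (y x) * F x
      = ∫ x in Ioi (0:ℝ), (starRingEnd ℂ) (y x) * (F x + F (-x)) := by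
    rw [← integral_add hI2 hI1]
    refine integral_congr_ae (Eventually.of_forall fun x => ?_)
    ring
  rw [step1, ← hsplit, hleft, hright, hadd]

lemma inner_odd_ext {y : ℝ → ℂ} (hy : MemLp y 2 muH) (f : Lp ℂ 2 (volume : Measure ℝ)) :
    @inner ℂ _ _ ((memLp_sign_smul_comp_abs hy).toLp
        (fun x : ℝ => (Real.sign x : ℂ) * y |x|)) f
      = ∫ x in Ioi (0:ℝ),
          (starRingEnd ℂ) (y x) * ((f : ℝ → ℂ) x - (f : ℝ → ℂ) (-x)) := by
  set F : ℝ → ℂ := (f : ℝ → ℂ) with hFdef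
  set U := (memLp_sign_smul_comp_abs hy).toLp (fun x : ℝ => (Real.sign x : ℂ) * y |x|)
    with hUdef
  have hUc : (U : ℝ → ℂ) =ᵐ[volume] fun x : ℝ => (Real.sign x : ℂ) * y |x| :=
    (memLp_sign_smul_comp_abs hy).coeFn_toLp
  have hInt : Integrable (fun x : ℝ => (starRingEnd ℂ) ((Real.sign x : ℂ) * y |x|) * F x)
      volume := by
    refine (L2.integrable_inner (𝕜 := ℂ) U f).congr ?_
    filter_upwards [hUc] with x hx
    simp [RCLike.inner_apply, hx]
    rw [hFdef]; ring
  have step1 : @inner ℂ _ _ U f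
      = ∫ x, (starRingEnd ℂ) ((Real.sign x : ℂ) * y |x|) * F x ∂volume := by
    rw [inner_eq_integral]
    refine integral_congr_ae ?_
    filter_upwards [hUc] with x hx
    rw [hx]
  have hsplit := intervalIntegral.integral_Iic_add_Ioi (b := (0:ℝ)) hInt.integrableOn hInt.integrableOn
  have hleft : (∫ x in Iic (0:ℝ), (starRingEnd ℂ) ((Real.sign x : ℂ) * y |x|) * F x)
      = -∫ x in Ioi (0:ℝ), (starRingEnd ℂ) (y x) * F (-x) := by
    have e := integral_comp_neg_Iic (0:ℝ)
      (fun t : ℝ => (starRingEnd ℂ) ((Real.sign (-t) : ℂ) * y |t|) * F (-t))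
    simp only [abs_neg, neg_neg, neg_zero] at e
    rw [e, ← integral_neg]
    refine setIntegral_congr_fun measurableSet_Ioi fun x hx => ?_
    rw [_root_.abs_of_pos hx, Real.sign_of_neg (neg_neg_iff_pos.mpr hx)]
    push_cast
    rw [neg_one_mul, map_neg]
    ring
  have hright : (∫ x in Ioi (0:ℝ), (starRingEnd ℂ) ((Real.sign x : ℂ) * y |x|) * F x)
      = ∫ x in Ioi (0:ℝ), (starRingEnd ℂ) (y x) * F x := by
    refine setIntegral_congr_fun measurableSet_Ioi fun x hx => ?_
    rw [_root_.abs_of_pos hx, Real.sign_of_pos hx]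
    push_cast
    ring
  have hFm : MemLp F 2 muH := (Lp.memLp f).restrict _
  have hFnm : MemLp (fun x : ℝ => F (-x)) 2 muH := (memLp_neg_comp f).restrict _
  have hI1 : Integrable (fun x : ℝ => (starRingEnd ℂ) (y x) * F x) muH :=
    integrable_conj_mul hy hFm
  have hI2 : Integrable (fun x : ℝ => (starRingEnd ℂ) (y x) * F (-x)) muH :=
    integrable_conj_mul hy hFnm
  have hadd : (-∫ x in Ioi (0:ℝ), (starRingEnd ℂ) (y x) * F (-x))
        + ∫ x in Ioi (0:ℝ), (starRingEnd ℂ) (y x) * F x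
      = ∫ x in Ioi (0:ℝ), (starRingEnd ℂ) (y x) * (F x - F (-x)) := by
    rw [neg_add_eq_sub, ← integral_sub hI1 hI2]
    refine integral_congr_ae (Eventually.of_forall fun x => ?_)
    ring
  rw [step1, ← hsplit, hleft, hright, hadd]

theorem even_potential_whole_line_complete
    (p : ℝ → ℂ) (hp : LocallyIntegrable p) (heven : ∀ x : ℝ, p (-x) = p x)
    (hDirichlet : Dense (↑(Submodule.span ℂ (halfLineEigen p (fun y _ => y 0 = 0))) :
      Set (Lp ℂ 2 muH)))
    (hNeumann : Dense (↑(Submodule.span ℂ (halfLineEigen p (fun _ y' => y' 0 = 0))) :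
      Set (Lp ℂ 2 muH))) :
    Dense (↑(Submodule.span ℂ (wholeLineEigen p)) : Set (Lp ℂ 2 (volume : Measure ℝ))) := by
  rw [Submodule.dense_iff_topologicalClosure_eq_top, Submodule.topologicalClosure_eq_top_iff,
    Submodule.eq_bot_iff]
  intro f hf
  rw [Submodule.mem_orthogonal] at hf
  set F : ℝ → ℂ := (f : ℝ → ℂ) with hFdef
  have hFm : MemLp F 2 muH := (Lp.memLp f).restrict _
  have hFnm : MemLp (fun x : ℝ => F (-x)) 2 muH := (memLp_neg_comp f).restrict _
  have hplus : MemLp (fun x : ℝ => F x + F (-x)) 2 muH := hFm.add hFnm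
  have hminus : MemLp (fun x : ℝ => F x - F (-x)) 2 muH := hFm.sub hFnm
  -- the even part pairs to zero against all Neumann eigenfunctions
  have hplus0 : hplus.toLp (fun x : ℝ => F x + F (-x)) = 0 := by
    refine dense_span_orth hNeumann ?_
    intro u hu
    obtain ⟨y, y', y'', lam, hy, h1, h2, h3, h4, hbc, hnz, hode, hcoe⟩ := hu
    have hmem := even_ext_mem p heven hy h1 h2 h3 h4 hbc hnz hode
    have horth : @inner ℂ _ _ ((memLp_comp_abs hy).toLp (fun x : ℝ => y |x|)) f = 0 :=
      hf _ (Submodule.subset_span hmem)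
    rw [inner_even_ext hy f] at horth
    rw [inner_eq_integral, ← horth]
    refine integral_congr_ae ?_
    filter_upwards [hcoe, hplus.coeFn_toLp] with x h5 h6
    rw [h5, h6]
  have hminus0 : hminus.toLp (fun x : ℝ => F x - F (-x)) = 0 := by
    refine dense_span_orth hDirichlet ?_
    intro u hu
    obtain ⟨y, y', y'', lam, hy, h1, h2, h3, h4, hbc, hnz, hode, hcoe⟩ := hu
    have hmem := odd_ext_mem p heven hy h1 h2 h3 h4 hbc hnz hode
    have horth : @inner ℂ _ _
        ((memLp_sign_smul_comp_abs hy).toLp (fun x : ℝ => (Real.sign x : ℂ) * y |x|)) f = 0 :=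
      hf _ (Submodule.subset_span hmem)
    rw [inner_odd_ext hy f] at horth
    rw [inner_eq_integral, ← horth]
    refine integral_congr_ae ?_
    filter_upwards [hcoe, hminus.coeFn_toLp] with x h5 h6
    rw [h5, h6]
  have hplusae : (fun x : ℝ => F x + F (-x)) =ᵐ[muH] (0 : ℝ → ℂ) := by
    have h := hplus.coeFn_toLp
    rw [hplus0] at h
    exact h.symm.trans (Lp.coeFn_zero ℂ 2 muH)
  have hminusae : (fun x : ℝ => F x - F (-x)) =ᵐ[muH] (0 : ℝ → ℂ) := by
    have h := hminus.coeFn_toLp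
    rw [hminus0] at h
    exact h.symm.trans (Lp.coeFn_zero ℂ 2 muH)
  have hFae : F =ᵐ[muH] (0 : ℝ → ℂ) := by
    filter_upwards [hplusae, hminusae] with x h5 h6
    simp only [Pi.zero_apply] at h5 h6 ⊢
    have h7 : (2:ℂ) * F x = 0 := by linear_combination h5 + h6
    exact (mul_eq_zero.mp h7).resolve_left (by norm_num)
  have hFnae : (fun x : ℝ => F (-x)) =ᵐ[muH] (0 : ℝ → ℂ) := by
    filter_upwards [hplusae, hminusae] with x h5 h6
    simp only [Pi.zero_apply] at h5 h6 ⊢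
    have h7 : (2:ℂ) * F (-x) = 0 := by linear_combination h5 - h6
    exact (mul_eq_zero.mp h7).resolve_left (by norm_num)
  -- conclude f = 0
  have hFmeas : MeasurableSet {x : ℝ | F x ≠ 0} := by
    have := (Lp.stronglyMeasurable f).measurable
    exact this (measurableSet_singleton 0).compl
  have hN1 : volume ({x : ℝ | F x ≠ 0} ∩ Ioi 0) = 0 := by
    have h : muH {x : ℝ | F x ≠ 0} = 0 := by
      have := ae_iff.mp hFae
      simpa using this
    have h2 := Measure.restrict_apply (μ := volume) (s := Ioi (0:ℝ)) hFmeas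
    exact h2.symm.trans h
  have hN2 : volume ({x : ℝ | F x ≠ 0} ∩ Iio 0) = 0 := by
    have hmeas2 : MeasurableSet {x : ℝ | F (-x) ≠ 0} := by
      have := ((Lp.stronglyMeasurable f).measurable.comp measurable_neg)
      exact this (measurableSet_singleton 0).compl
    have h0 : volume ({x : ℝ | F (-x) ≠ 0} ∩ Ioi 0) = 0 := by
      have h : muH {x : ℝ | F (-x) ≠ 0} = 0 := by
        have := ae_iff.mp hFnae
        simpa using this
      have h2 := Measure.restrict_apply (μ := volume) (s := Ioi (0:ℝ)) hmeas2
      exact h2.symm.trans h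
    have hset : Neg.neg ⁻¹' ({x : ℝ | F (-x) ≠ 0} ∩ Ioi 0) = {x : ℝ | F x ≠ 0} ∩ Iio 0 := by
      ext x
      simp only [mem_preimage, Set.mem_inter_iff, mem_setOf_eq, mem_Ioi, mem_Iio, neg_neg]
      constructor
      · rintro ⟨h1, h2⟩; exact ⟨h1, by linarith⟩
      · rintro ⟨h1, h2⟩; exact ⟨h1, by linarith⟩
    have := (Measure.measurePreserving_neg (volume : Measure ℝ)).measure_preimage
      (s := {x : ℝ | F (-x) ≠ 0} ∩ Ioi 0) ((hmeas2.inter measurableSet_Ioi)).nullMeasurableSet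
    rw [hset] at this
    rw [this, h0]
  have hFvol : F =ᵐ[volume] (0 : ℝ → ℂ) := by
    rw [EventuallyEq, ae_iff]
    refine measure_mono_null (fun x hx => ?_)
      (measure_union_null (measure_union_null hN2 (measure_singleton 0)) hN1)
    simp only [mem_setOf_eq, Pi.zero_apply] at hx
    rcases lt_trichotomy x 0 with h | h | h
    · exact Or.inl (Or.inl ⟨hx, h⟩)
    · exact Or.inl (Or.inr h)
    · exact Or.inr ⟨hx, h⟩
  exact (Lp.eq_zero_iff_ae_eq_zero).mpr hFvol
end
end
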